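/- arXiv:2103.04157 — 4 statements merged into one kernel-verified Lean document; each statement's English description precedes it below -/
import Mathlib

section
/- There exists a vector e = (e₁,…,e₈) ∈ ℝ⁸ such that the 45 real numbers 1, e_i (1 ≤ i ≤ 8), and e_i·e_j (1 ≤ i ≤ j ≤ 8) are linearly independent over ℚ, and such that |(e,e)| ≤ 1/2, where (e,e) = −eᵀCe is the value of the −E8 form on e. -/
open scoped BigOperators

/-- The Cartan matrix of E8 (Bourbaki numbering, 0-indexed): diagonal entries 2,
entry -1 exactly for the edges of the E8 Dynkin diagram. -/
def E8Cartan : Matrix (Fin 8) (Fin 8) ℤ :=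
  !![ 2,  0, -1,  0,  0,  0,  0,  0;
      0,  2,  0, -1,  0,  0,  0,  0;
     -1,  0,  2, -1,  0,  0,  0,  0;
      0, -1, -1,  2, -1,  0,  0,  0;
      0,  0,  0, -1,  2, -1,  0,  0;
      0,  0,  0,  0, -1,  2, -1,  0;
      0,  0,  0,  0,  0, -1,  2, -1;
      0,  0,  0,  0,  0,  0, -1,  2]

/-- Integer value `dᵀ C d'` of the E8 Cartan pairing. -/
def pairCZ (d d' : Fin 8 → ℤ) : ℤ := ∑ i, ∑ j, d i * E8Cartan i j * d' j

/-- Real value `wᵀ C w'` of the (real extension of the) E8 Cartan pairing. -/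
def pairCR (w w' : Fin 8 → ℝ) : ℝ := ∑ i, ∑ j, w i * (E8Cartan i j : ℝ) * w' j

/-- The `−E8` pairing, real coefficients. -/
def innE8R (w w' : Fin 8 → ℝ) : ℝ := -pairCR w w'

/-- The `−E8` pairing, integer coefficients. -/
def innE8Z (d d' : Fin 8 → ℤ) : ℤ := -pairCZ d d'

/-- The K3 lattice `L = ℤ⁶ ⊕ ℤ⁸ ⊕ ℤ⁸`. -/
abbrev LZ := (Fin 6 → ℤ) × (Fin 8 → ℤ) × (Fin 8 → ℤ)

/-- `L_ℝ = ℝ⁶ ⊕ ℝ⁸ ⊕ ℝ⁸`. -/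
abbrev LR := (Fin 6 → ℝ) × (Fin 8 → ℝ) × (Fin 8 → ℝ)

/-- The K3 bilinear form `Q` (integer version).  Coordinates `0,…,5` of the first
factor are `u, v, x, y, z, t`; one has `Q(u,v) = Q(x,y) = Q(z,t) = 1`, all other
pairings among `u,…,t` vanish, each `ℤ⁸` factor carries `−C`, and the three
factors are mutually orthogonal. -/
def QZ (d d' : LZ) : ℤ :=
  (d.1 0 * d'.1 1 + d.1 1 * d'.1 0 + d.1 2 * d'.1 3 + d.1 3 * d'.1 2
    + d.1 4 * d'.1 5 + d.1 5 * d'.1 4)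
  - pairCZ d.2.1 d'.2.1 - pairCZ d.2.2 d'.2.2

/-- The K3 bilinear form `Q`, extended `ℝ`-bilinearly to `L_ℝ`. -/
def QR (w w' : LR) : ℝ :=
  (w.1 0 * w'.1 1 + w.1 1 * w'.1 0 + w.1 2 * w'.1 3 + w.1 3 * w'.1 2
    + w.1 4 * w'.1 5 + w.1 5 * w'.1 4)
  - pairCR w.2.1 w'.2.1 - pairCR w.2.2 w'.2.2

/-- The inclusion `L → L_ℝ`. -/
def incl (d : LZ) : LR :=
  (fun i => (d.1 i : ℝ), fun i => (d.2.1 i : ℝ), fun i => (d.2.2 i : ℝ))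

/-- The family of 45 real numbers `1`, `eᵢ` (`1 ≤ i ≤ 8`) and `eᵢ·eⱼ` (`1 ≤ i ≤ j ≤ 8`). -/
def fam45 (e : Fin 8 → ℝ) : Option (Fin 8 ⊕ {p : Fin 8 × Fin 8 // p.1 ≤ p.2}) → ℝ
  | none => 1
  | some (Sum.inl i) => e i
  | some (Sum.inr p) => e p.1.1 * e p.1.2


section Aux

/-- Powers of a transcendental real are `ℚ`-linearly independent. -/
lemma linearIndependent_pow_of_transcendental {x : ℝ} (hx : Transcendental ℚ x) :
    LinearIndependent ℚ (fun n : ℕ => x ^ n) := by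
  rw [linearIndependent_iff']
  intro s g h i hi
  set p : Polynomial ℚ := ∑ j ∈ s, Polynomial.C (g j) * Polynomial.X ^ j with hp
  have haev : Polynomial.aeval x p = 0 := by
    rw [hp, map_sum]
    rw [← h]
    refine Finset.sum_congr rfl fun j _ => ?_
    simp [Polynomial.aeval_C, Rat.smul_def, Algebra.smul_def]
  have hp0 : p = 0 := transcendental_iff.mp hx p haev
  have := congrArg (fun q => Polynomial.coeff q i) hp0
  simp only [hp, Polynomial.finset_sum_coeff, Polynomial.coeff_C_mul,
    Polynomial.coeff_X_pow, Polynomial.coeff_zero] at this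
  rw [Finset.sum_eq_single i (fun b _ hb => by simp [Ne.symm hb]) (fun h' => absurd hi h')] at this
  simpa using this

/-- The index map into exponents. -/
def expMap : Option (Fin 8 ⊕ {p : Fin 8 × Fin 8 // p.1 ≤ p.2}) → ℕ
  | none => 0
  | some (Sum.inl i) => 4 ^ ((i : ℕ) + 1)
  | some (Sum.inr p) => 4 ^ ((p.1.1 : ℕ) + 1) + 4 ^ ((p.1.2 : ℕ) + 1)

lemma expMap_injective : Function.Injective expMap := by decide

lemma pairCR_smul (c : ℝ) (w : Fin 8 → ℝ) :
    pairCR (fun i => c * w i) (fun i => c * w i) = c ^ 2 * pairCR w w := by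
  unfold pairCR
  rw [Finset.mul_sum]
  refine Finset.sum_congr rfl fun i _ => ?_
  rw [Finset.mul_sum]
  exact Finset.sum_congr rfl fun j _ => by ring

end Aux

/-- There exists `e ∈ ℝ⁸` such that the 45 numbers `1`, `eᵢ`, `eᵢ·eⱼ` (`i ≤ j`) are
linearly independent over `ℚ` and `|(e,e)| ≤ 1/2`, where `(e,e) = −eᵀCe`. -/
theorem statement0 :
    ∃ e : Fin 8 → ℝ, LinearIndependent ℚ (fam45 e) ∧ |innE8R e e| ≤ 1 / 2 := by
  -- a transcendental number
  set x : ℝ := liouvilleNumber 2 with hxdef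
  have hxZ : Transcendental ℤ x := transcendental_liouvilleNumber (le_refl 2)
  have hx : Transcendental ℚ x := fun h => hxZ ((IsFractionRing.isAlgebraic_iff ℤ ℚ ℝ).mpr h)
  have hpow := linearIndependent_pow_of_transcendental hx
  -- base vector
  set e : Fin 8 → ℝ := fun i => x ^ (4 ^ ((i : ℕ) + 1)) with he
  have hfam : fam45 e = (fun n : ℕ => x ^ n) ∘ expMap := by
    funext o
    rcases o with _ | (i | p)
    · simp [fam45, expMap]
    · simp [fam45, expMap, he]
    · simp [fam45, expMap, he, pow_add]
  have hinde : LinearIndependent ℚ (fam45 e) := by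
    rw [hfam]; exact hpow.comp expMap expMap_injective
  -- choose scaling
  obtain ⟨n, hn⟩ := exists_nat_gt (2 * |innE8R e e|)
  have hn1 : 1 ≤ n := by
    by_contra h
    interval_cases n
    · simp at hn
      nlinarith [abs_nonneg (innE8R e e)]
  have hnQ : ((n : ℚ)) ≠ 0 := by positivity
  set q : ℚ := 1 / (n : ℚ) with hq
  have hq0 : q ≠ 0 := one_div_ne_zero hnQ
  refine ⟨fun i => (q : ℝ) * e i, ?_, ?_⟩
  · -- linear independence after scaling by the nonzero rational q
    set w : Option (Fin 8 ⊕ {p : Fin 8 × Fin 8 // p.1 ≤ p.2}) → ℚˣ := fun o =>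
      match o with
      | none => 1
      | some (Sum.inl _) => Units.mk0 q hq0
      | some (Sum.inr _) => Units.mk0 (q ^ 2) (pow_ne_zero 2 hq0) with hw
    have : fam45 (fun i => (q : ℝ) * e i) = w • fam45 e := by
      funext o
      rcases o with _ | (i | p)
      · simp [fam45, hw]
      · simp [fam45, hw, Rat.smul_def]
      · simp only [fam45, hw, Pi.smul_apply', Units.smul_def, Units.val_mk0, Rat.smul_def]
        push_cast
        ring
    rw [this]
    exact hinde.units_smul w
  · -- the bound
    have hval : innE8R (fun i => (q : ℝ) * e i) (fun i => (q : ℝ) * e i)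
        = (q : ℝ) ^ 2 * innE8R e e := by
      unfold innE8R
      rw [pairCR_smul]; ring
    rw [hval, abs_mul, abs_pow]
    have hqr : |(q : ℝ)| = 1 / (n : ℝ) := by
      rw [hq]
      push_cast
      rw [abs_of_pos (by positivity)]
    rw [hqr]
    have hnR : (1 : ℝ) ≤ (n : ℝ) := by exact_mod_cast hn1
    have hB : |innE8R e e| ≤ (n : ℝ) / 2 := by
      have : (2 : ℝ) * |innE8R e e| < n := by exact_mod_cast hn
      linarith
    calc (1 / (n : ℝ)) ^ 2 * |innE8R e e| ≤ (1 / (n : ℝ)) ^ 2 * ((n : ℝ) / 2) := by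
          apply mul_le_mul_of_nonneg_left hB (by positivity)
      _ = (n : ℝ) / (2 * (n:ℝ)^2) := by ring
      _ ≤ 1 / 2 := by
          rw [div_le_div_iff₀ (by positivity) (by norm_num)]
          nlinarith
end

section
/- The ℤ-linear map φ: L → L determined by u ↦ u, v ↦ v+y, x ↦ x−u, y ↦ y and the identity on z, t and on the two ℤ⁸ factors is an isometry of (L,Q), i.e. Q(φ(d),φ(d')) = Q(d,d') for all d,d' ∈ L; moreover its ℝ-linear extension satisfies φ(f₁(s)) = f₁(s+1), φ(f₂(s)) = f₂(s+1), and φ(f₃(s)) = f₃(s+1) for every s ∈ ℝ. -/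
open scoped BigOperators

/-- `φ` on the `ℤ⁶`/`ℝ⁶` factor: `u ↦ u`, `v ↦ v + y`, `x ↦ x − u`, `y ↦ y`,
`z ↦ z`, `t ↦ t` (in coordinates). -/
def phi6 {R : Type*} [Ring R] (w : Fin 6 → R) : Fin 6 → R :=
  ![w 0 - w 2, w 1, w 2, w 1 + w 3, w 4, w 5]

/-- `φ : L → L`, identity on the two `ℤ⁸` factors. -/
def phiZ (d : LZ) : LZ := (phi6 d.1, d.2.1, d.2.2)

/-- The `ℝ`-linear extension of `φ`. -/
def phiR (w : LR) : LR := (phi6 w.1, w.2.1, w.2.2)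

/-- `f₁(s) = 2u + v + s·y`. -/
def f1 (s : ℝ) : LR := (![2, 1, 0, s, 0, 0], 0, 0)

/-- `f₂(s) = x − s·u + 2y + a`, where `a = (0, e)`. -/
def f2 (e : Fin 8 → ℝ) (s : ℝ) : LR := (![-s, 0, 1, 2, 0, 0], 0, e)

/-- `f₃(s) = z + 2t + b`, where `b = (e, 0)`. -/
def f3 (e : Fin 8 → ℝ) (_ : ℝ) : LR := (![0, 0, 0, 0, 1, 2], e, 0)

lemma val5' {α : Type*} (a b c d e f : α) : (![a,b,c,d,e,f] : Fin 6 → α) 5 = f := rfl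

/-- `φ` is an isometry of `(L, Q)` and its `ℝ`-linear extension satisfies
`φ(fᵢ(s)) = fᵢ(s+1)` for `i = 1, 2, 3` and all `s ∈ ℝ`. -/
theorem statement5 (e : Fin 8 → ℝ) :
    (∀ d d' : LZ, QZ (phiZ d) (phiZ d') = QZ d d') ∧
    (∀ s : ℝ, phiR (f1 s) = f1 (s + 1) ∧ phiR (f2 e s) = f2 e (s + 1) ∧
      phiR (f3 e s) = f3 e (s + 1)) := by
  constructor
  · intro d d'
    simp only [QZ, phiZ, phi6, Matrix.cons_val_zero, Matrix.cons_val_one, Matrix.head_cons,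
      Matrix.cons_val_two, Matrix.cons_val_three, Matrix.cons_val_four, Matrix.tail_cons,
      Matrix.cons_val_fin_one, Matrix.cons_val_succ, val5']
    ring
  · intro s
    refine ⟨?_, ?_, ?_⟩ <;>
    · refine Prod.ext ?_ rfl
      funext i
      fin_cases i <;> simp [phiR, f1, f2, f3, phi6, Matrix.cons_val_succ, val5'] <;> ring
end

section
/- Assume |(e,e)| ≤ 1/2, where (e,e) = −eᵀCe. Then for every s ∈ ℝ: Q(f₁(s),f₁(s)) = 4 > 0, Q(f₂(s),f₂(s)) = 4 + (e,e) > 0, Q(f₃(s),f₃(s)) = 4 + (e,e) > 0, and Q(f₂(s),f₃(s)) = Q(f₁(s),f₂(s)) = Q(f₁(s),f₃(s)) = 0. -/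
open scoped BigOperators

lemma vec6_val5 (a b c d e f : ℝ) : ![a,b,c,d,e,f] 5 = f := rfl
lemma vec6_val4 (a b c d e f : ℝ) : ![a,b,c,d,e,f] 4 = e := rfl

lemma pairCR_zero_left (w : Fin 8 → ℝ) : pairCR 0 w = 0 := by
  simp [pairCR]

lemma pairCR_zero_right (w : Fin 8 → ℝ) : pairCR w 0 = 0 := by
  simp [pairCR]

/-- If `|(e,e)| ≤ 1/2` then for every `s ∈ ℝ`: `Q(f₁,f₁) = 4 > 0`,
`Q(f₂,f₂) = Q(f₃,f₃) = 4 + (e,e) > 0`, and `Q(f₂,f₃) = Q(f₁,f₂) = Q(f₁,f₃) = 0`. -/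
theorem statement6 (e : Fin 8 → ℝ) (he : |innE8R e e| ≤ 1 / 2) (s : ℝ) :
    (QR (f1 s) (f1 s) = 4 ∧ 0 < QR (f1 s) (f1 s)) ∧
    (QR (f2 e s) (f2 e s) = 4 + innE8R e e ∧ 0 < QR (f2 e s) (f2 e s)) ∧
    (QR (f3 e s) (f3 e s) = 4 + innE8R e e ∧ 0 < QR (f3 e s) (f3 e s)) ∧
    QR (f2 e s) (f3 e s) = 0 ∧ QR (f1 s) (f2 e s) = 0 ∧ QR (f1 s) (f3 e s) = 0 := by
  have h1 : -(1/2 : ℝ) ≤ innE8R e e := neg_le_of_abs_le he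
  have h4 : (0:ℝ) < 4 + innE8R e e := by linarith
  have h5 : pairCR e e < 4 := by
    have : innE8R e e = -pairCR e e := rfl
    linarith [this ▸ h4]
  refine ⟨⟨?_, ?_⟩, ⟨?_, ?_⟩, ⟨?_, ?_⟩, ?_, ?_, ?_⟩ <;>
    simp [QR, f1, f2, f3, innE8R, pairCR_zero_left, pairCR_zero_right, vec6_val5, vec6_val4] <;> ring_nf <;> linarith
end

section
/- Assume the 45 real numbers 1, e_i (1 ≤ i ≤ 8), and e_i·e_j (1 ≤ i ≤ j ≤ 8) are linearly independent over ℚ. Then for every s ∈ ℝ there is no d ∈ L with Q(d,d) = −2 and Q(d,f₁(s)) = Q(d,f₂(s)) = Q(d,f₃(s)) = 0. -/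
open scoped BigOperators

open Matrix in
lemma cons_val_five' {α : Type*} {m : ℕ} (x : α) (u : Fin (m+5) → α) :
    vecCons x u 5 = vecHead (vecTail (vecTail (vecTail (vecTail u)))) := rfl
open Matrix in
lemma cons_val_six' {α : Type*} {m : ℕ} (x : α) (u : Fin (m+6) → α) :
    vecCons x u 6 = vecHead (vecTail (vecTail (vecTail (vecTail (vecTail u))))) := rfl
open Matrix in
lemma cons_val_seven' {α : Type*} {m : ℕ} (x : α) (u : Fin (m+7) → α) :
    vecCons x u 7 = vecHead (vecTail (vecTail (vecTail (vecTail (vecTail (vecTail u)))))) := rfl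

lemma pairCR_cast (n : Fin 8 → ℤ) (e : Fin 8 → ℝ) :
    pairCR (fun i => (n i : ℝ)) e = ∑ j, ((∑ i, n i * E8Cartan i j : ℤ) : ℝ) * e j := by
  rw [pairCR, Finset.sum_comm]
  refine Finset.sum_congr rfl fun j _ => ?_
  push_cast
  rw [Finset.sum_mul]

lemma pairCZ_col (n n' : Fin 8 → ℤ) :
    pairCZ n n' = ∑ j, (∑ i, n i * E8Cartan i j) * n' j := by
  rw [pairCZ, Finset.sum_comm]
  refine Finset.sum_congr rfl fun j _ => ?_
  rw [Finset.sum_mul]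

lemma pairCZ_sq (n : Fin 8 → ℤ) :
    4 * pairCZ n n =
      (n 0 + 2*n 1 - 2*n 2)^2 + (-n 0 + 2*n 1 + 2*n 2 - 2*n 3)^2
      + (-n 0 + 2*n 3 - 2*n 4)^2 + (-n 0 + 2*n 4 - 2*n 5)^2
      + (-n 0 + 2*n 5 - 2*n 6)^2 + (-n 0 + 2*n 6 - 2*n 7)^2
      + (-n 0 + 2*n 7)^2 + (n 0)^2 := by
  simp [pairCZ, E8Cartan, Fin.sum_univ_eight, Matrix.vecHead, Matrix.vecTail,
    cons_val_five', cons_val_six', cons_val_seven']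
  ring

lemma pairCZ_nonneg (n : Fin 8 → ℤ) : 0 ≤ pairCZ n n := by
  nlinarith [pairCZ_sq n, sq_nonneg (n 0 + 2*n 1 - 2*n 2), sq_nonneg (-n 0 + 2*n 1 + 2*n 2 - 2*n 3),
    sq_nonneg (-n 0 + 2*n 3 - 2*n 4), sq_nonneg (-n 0 + 2*n 4 - 2*n 5),
    sq_nonneg (-n 0 + 2*n 5 - 2*n 6), sq_nonneg (-n 0 + 2*n 6 - 2*n 7),
    sq_nonneg (-n 0 + 2*n 7), sq_nonneg (n 0)]

lemma key45 (e : Fin 8 → ℝ) (he : LinearIndependent ℚ (fam45 e)) (q : ℤ) (c : Fin 8 → ℤ)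
    (h : (q : ℝ) = ∑ j, (c j : ℝ) * e j) : q = 0 ∧ ∀ j, c j = 0 := by
  rw [Fintype.linearIndependent_iff] at he
  set g : Option (Fin 8 ⊕ {p : Fin 8 × Fin 8 // p.1 ≤ p.2}) → ℚ :=
    fun i => match i with
      | none => -(q : ℚ)
      | some (Sum.inl j) => (c j : ℚ)
      | some (Sum.inr _) => 0 with hg
  have hsum : ∑ i, g i • fam45 e i = 0 := by
    rw [Fintype.sum_option, Fintype.sum_sum_type]
    simp only [hg, fam45, Rat.smul_def, Rat.cast_zero, zero_mul, Finset.sum_const_zero,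
      Rat.cast_neg, Rat.cast_intCast, mul_one, add_zero]
    rw [h]
    ring
  have hz := he g hsum
  constructor
  · have h0 := hz none
    simp only [hg] at h0
    exact_mod_cast neg_eq_zero.mp h0
  · intro j
    have hj := hz (some (Sum.inl j))
    simp only [hg] at hj
    exact_mod_cast hj


/-- If the 45 numbers `1`, `eᵢ`, `eᵢ·eⱼ` are linearly independent over `ℚ`, then
for every `s ∈ ℝ` there is no `d ∈ L` with `Q(d,d) = −2` and
`Q(d,f₁(s)) = Q(d,f₂(s)) = Q(d,f₃(s)) = 0`. -/

theorem statement7 (e : Fin 8 → ℝ) (he : LinearIndependent ℚ (fam45 e)) (s : ℝ) :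
    ¬ ∃ d : LZ, QZ d d = -2 ∧ QR (incl d) (f1 s) = 0 ∧
      QR (incl d) (f2 e s) = 0 ∧ QR (incl d) (f3 e s) = 0 := by
  rintro ⟨⟨c, m, n⟩, hd, h1, h2, h3⟩
  simp only [QR, incl, f1, f2, f3, Matrix.cons_val_zero, Matrix.cons_val_one,
    Matrix.head_cons, Matrix.cons_val_two, Matrix.cons_val_three, Matrix.cons_val_four,
    cons_val_five', Matrix.vecHead, Matrix.vecTail, Function.comp, Matrix.cons_val_succ,
    pairCR_zero_right, pairCR_cast] at h1 h2 h3
  simp only [QZ] at hd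
  -- the f3 equation forces the m-part to pair trivially
  obtain ⟨hc45, hm0⟩ := key45 e he (2 * c 4 + c 5) (fun j => ∑ i, m i * E8Cartan i j)
    (by push_cast; push_cast at h3; linarith)
  have hpm : pairCZ m m = 0 := by
    rw [pairCZ_col]
    exact Finset.sum_eq_zero fun j _ => by rw [hm0 j, zero_mul]
  have h5 : c 5 = -2 * c 4 := by omega
  by_cases hc1 : c 1 = 0
  · obtain ⟨hc23, hn0⟩ := key45 e he (2 * c 2 + c 3) (fun j => ∑ i, n i * E8Cartan i j)
      (by simp only [hc1] at h2; push_cast; push_cast at h2; linarith)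
    have hpn : pairCZ n n = 0 := by
      rw [pairCZ_col]
      exact Finset.sum_eq_zero fun j _ => by rw [hn0 j, zero_mul]
    have h4 : c 3 = -2 * c 2 := by omega
    rw [hpm, hpn, hc1, h4, h5] at hd
    have hk : 2 * (c 2 * c 2 + c 4 * c 4) = 1 := by linarith
    obtain ⟨k, hk2⟩ : ∃ k : ℤ, 2 * k = 1 := ⟨_, hk⟩
    omega
  · have hE1 : (c 0 : ℝ) + 2 * (c 1 : ℝ) + s * (c 2 : ℝ) = 0 := by linarith
    set T : ℝ := ∑ j : Fin 8, ((∑ i : Fin 8, n i * E8Cartan i j : ℤ) : ℝ) * e j with hT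
    have hE2 : -(s * (c 1 : ℝ)) + 2 * (c 2 : ℝ) + (c 3 : ℝ) - T = 0 := by
      linarith
    have hsum2 : ∑ j : Fin 8, ((c 2 * ∑ i : Fin 8, n i * E8Cartan i j : ℤ) : ℝ) * e j
        = (c 2 : ℝ) * T := by
      rw [hT, Finset.mul_sum]
      exact Finset.sum_congr rfl fun j _ => by push_cast; ring
    obtain ⟨hq, hcn⟩ := key45 e he (c 0 * c 1 + 2 * c 1 * c 1 + 2 * c 2 * c 2 + c 2 * c 3)
      (fun j => c 2 * ∑ i, n i * E8Cartan i j)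
      (by rw [hsum2]; push_cast; linear_combination (c 2 : ℝ) * hE2 + (c 1 : ℝ) * hE1)
    have h11 : 1 ≤ c 1 * c 1 := by
      rcases lt_or_gt_of_ne hc1 with h | h <;> nlinarith [sq_nonneg (c 1 + 1), sq_nonneg (c 1 - 1)]
    by_cases hc2 : c 2 = 0
    · have hpn := pairCZ_nonneg n
      rw [hpm, hc2, h5] at hd
      rw [hc2] at hq
      nlinarith [mul_self_nonneg (c 4)]
    · have hn0 : ∀ j, (∑ i, n i * E8Cartan i j) = 0 := fun j =>
        (mul_eq_zero.mp (hcn j)).resolve_left hc2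
      have hpn : pairCZ n n = 0 := by
        rw [pairCZ_col]
        exact Finset.sum_eq_zero fun j _ => by rw [hn0 j, zero_mul]
      rw [hpm, hpn, h5] at hd
      have hk : 2 * (c 1 * c 1 + c 2 * c 2 + c 4 * c 4) = 1 := by linarith
      obtain ⟨k, hk2⟩ : ∃ k : ℤ, 2 * k = 1 := ⟨_, hk⟩
      omega
end
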